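/- For all a, b > 0 and 0 ≤ t ≤ 1, setting h = b/a and r = min{t, 1-t}, one has ((1+h)²/(4h))^r · a^{1-t} b^t ≤ (1-t)a + tb. -/

import Mathlib

lemma key_rpow (h t : ℝ) (hh : 0 < h) (ht0 : 0 ≤ t) (ht2 : t ≤ 1/2) :
    ((1 + h) ^ 2 / (4 * h)) ^ t * h ^ t ≤ 1 - t + t * h := by
  have hx : (0:ℝ) ≤ (1 + h) / 2 := by positivity
  have h1 : ((1 + h) ^ 2 / (4 * h)) ^ t * h ^ t = ((1 + h) / 2) ^ (2 * t) := by
    rw [← Real.mul_rpow (by positivity) hh.le]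
    have : (1 + h) ^ 2 / (4 * h) * h = ((1 + h) / 2) ^ 2 := by
      field_simp; ring
    rw [this, ← Real.rpow_natCast ((1 + h) / 2) 2, ← Real.rpow_mul hx]
    norm_num
  rw [h1]
  have := Real.geom_mean_le_arith_mean2_weighted (w₁ := 1 - 2 * t) (w₂ := 2 * t)
    (p₁ := 1) (p₂ := (1 + h) / 2) (by linarith) (by linarith) zero_le_one hx (by ring)
  rw [Real.one_rpow, one_mul, mul_one] at this
  linarith

lemma key (a b t : ℝ) (ha : 0 < a) (hb : 0 < b) (ht0 : 0 ≤ t) (ht2 : t ≤ 1/2) :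
    ((1 + b / a) ^ 2 / (4 * (b / a))) ^ t * a ^ (1 - t) * b ^ t ≤ (1 - t) * a + t * b := by
  set h := b / a with hhdef
  have hh : 0 < h := div_pos hb ha
  have hba : b = h * a := by rw [hhdef]; field_simp
  have hbt : b ^ t = h ^ t * a ^ t := by
    rw [hba, Real.mul_rpow hh.le ha.le]
  have haa : a ^ (1 - t) * a ^ t = a := by
    rw [← Real.rpow_add ha]; norm_num
  calc ((1 + h) ^ 2 / (4 * h)) ^ t * a ^ (1 - t) * b ^ t
      = (((1 + h) ^ 2 / (4 * h)) ^ t * h ^ t) * a := by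
        rw [hbt]; rw [mul_comm (h ^ t) (a ^ t)]
        rw [show ((1 + h) ^ 2 / (4 * h)) ^ t * a ^ (1 - t) * (a ^ t * h ^ t)
          = ((1 + h) ^ 2 / (4 * h)) ^ t * h ^ t * (a ^ (1 - t) * a ^ t) by ring, haa]
    _ ≤ (1 - t + t * h) * a := by
        have := key_rpow h t hh ht0 ht2
        nlinarith [ha]
    _ = (1 - t) * a + t * b := by rw [hba]; ring

theorem refined_am_gm (a b t : ℝ) (ha : 0 < a) (hb : 0 < b) (ht0 : 0 ≤ t) (ht1 : t ≤ 1) :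
    ((1 + b / a) ^ 2 / (4 * (b / a))) ^ min t (1 - t) * a ^ (1 - t) * b ^ t ≤
      (1 - t) * a + t * b := by
  rcases le_total t (1/2) with hc | hc
  · rw [min_eq_left (by linarith)]
    exact key a b t ha hb ht0 hc
  · rw [min_eq_right (by linarith)]
    have hsym : (1 + b / a) ^ 2 / (4 * (b / a)) = (1 + a / b) ^ 2 / (4 * (a / b)) := by
      field_simp; ring
    have := key b a (1 - t) hb ha (by linarith) (by linarith)
    rw [show (1 : ℝ) - (1 - t) = t by ring] at this
    rw [hsym, show ((1 + a / b) ^ 2 / (4 * (a / b))) ^ (1 - t) * a ^ (1 - t) * b ^ t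
      = ((1 + a / b) ^ 2 / (4 * (a / b))) ^ (1 - t) * b ^ t * a ^ (1 - t) by ring]
    linarith
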